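/- Let Z_i, i=1,…,m₁, be independent N(θ√(log m),1) random variables with 0 < θ and let t_m = G⁻¹(C·m^{β−1}) with G(t)=2(1−Φ(t)), β ∈ (0,1), C>0. If θ < √(2(1−β)), then (1/m₁)·Σ_i 1{|Z_i| ≥ t_m} → 0 in probability as m → ∞. -/

import Mathlib

open MeasureTheory ProbabilityTheory Filter

/-- The standard normal CDF. -/
noncomputable def stdNormalCDF (t : ℝ) : ℝ :=
  (gaussianReal 0 1 (Set.Iic t)).toReal

/-- `G(t) = 2(1 - Φ(t))`. -/
noncomputable def Gtail (t : ℝ) : ℝ := 2 * (1 - stdNormalCDF t)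

open Real in
/-- The standard normal upper tail probability. -/
noncomputable def stdTail (s : ℝ) : ℝ := (gaussianReal 0 1 (Set.Ici s)).toReal

lemma gaussian_singleton (μ0 : ℝ) (a : ℝ) : gaussianReal μ0 1 {a} = 0 := by
  rw [gaussianReal_apply μ0 one_ne_zero]
  exact setLIntegral_measure_zero _ _ (measure_singleton a)

lemma stdTail_eq (s : ℝ) : stdTail s = 1 - stdNormalCDF s := by
  have h1 : gaussianReal 0 1 (Set.Ici s) = gaussianReal 0 1 (Set.Ioi s) := by
    refine le_antisymm ?_ (measure_mono Set.Ioi_subset_Ici_self)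
    calc gaussianReal 0 1 (Set.Ici s) = gaussianReal 0 1 (Set.Ioi s ∪ {s}) := by
          rw [Set.Ioi_union_left]
      _ ≤ gaussianReal 0 1 (Set.Ioi s) + gaussianReal 0 1 {s} := measure_union_le _ _
      _ = gaussianReal 0 1 (Set.Ioi s) := by rw [gaussian_singleton, add_zero]
  have h2 : gaussianReal 0 1 (Set.Iic s) + gaussianReal 0 1 (Set.Ioi s) = 1 := by
    rw [← measure_union (Set.Iic_disjoint_Ioi le_rfl) measurableSet_Ioi,
      Set.Iic_union_Ioi, measure_univ]
  have h3 : stdNormalCDF s + stdTail s = 1 := by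
    rw [stdNormalCDF, stdTail, h1, ← ENNReal.toReal_add (measure_ne_top _ _) (measure_ne_top _ _),
      h2, ENNReal.toReal_one]
  linarith

lemma Gtail_eq (s : ℝ) : Gtail s = 2 * stdTail s := by
  rw [Gtail, stdTail_eq]

lemma Gtail_anti : Antitone Gtail := by
  intro x y hxy
  rw [Gtail_eq, Gtail_eq]
  have : gaussianReal 0 1 (Set.Ici y) ≤ gaussianReal 0 1 (Set.Ici x) :=
    measure_mono (Set.Ici_subset_Ici.2 hxy)
  have := ENNReal.toReal_mono (measure_ne_top _ _) this
  rw [stdTail, stdTail]; linarith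

lemma gaussian_Ici_translate (μ0 s : ℝ) :
    gaussianReal μ0 1 (Set.Ici s) = gaussianReal 0 1 (Set.Ici (s - μ0)) := by
  have h : gaussianReal μ0 1 = (gaussianReal 0 1).map (· + μ0) := by
    rw [gaussianReal_map_add_const, zero_add]
  rw [h, Measure.map_apply (measurable_add_const μ0) measurableSet_Ici]
  congr 1
  ext x
  simp [Set.mem_preimage, le_sub_iff_add_le]

lemma gaussian_Iic_translate (μ0 s : ℝ) :
    gaussianReal μ0 1 (Set.Iic s) = gaussianReal 0 1 (Set.Iic (s - μ0)) := by
  have h : gaussianReal μ0 1 = (gaussianReal 0 1).map (· + μ0) := by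
    rw [gaussianReal_map_add_const, zero_add]
  rw [h, Measure.map_apply (measurable_add_const μ0) measurableSet_Iic]
  congr 1
  ext x
  simp [Set.mem_preimage, sub_le_iff_le_add]

lemma gaussian_neg_symm (s : ℝ) :
    gaussianReal 0 1 (Set.Iic (-s)) = gaussianReal 0 1 (Set.Ici s) := by
  have hmap : (gaussianReal 0 1).map (fun x => (-1) * x) = gaussianReal 0 1 := by
    rw [gaussianReal_map_const_mul (-1)]
    norm_num
  conv_lhs => rw [← hmap]
  rw [Measure.map_apply (measurable_const_mul _) measurableSet_Iic]
  congr 1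
  ext x
  simp [Set.mem_preimage, neg_le_neg_iff]

open Real in
lemma gaussianPDFReal_01 (x : ℝ) :
    gaussianPDFReal 0 1 x = (Real.sqrt (2 * π))⁻¹ * Real.exp (-x ^ 2 / 2) := by
  simp [gaussianPDFReal]

open Real in
lemma stdTail_lower {s : ℝ} (hs : 0 ≤ s) :
    (Real.sqrt (2 * π))⁻¹ * Real.exp (-(s + 1) ^ 2 / 2) ≤ stdTail s := by
  have hInt : IntegrableOn (gaussianPDFReal 0 1) (Set.Icc s (s + 1)) volume :=
    (integrable_gaussianPDFReal 0 1).integrableOn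
  have hmono : ∀ x ∈ Set.Icc s (s + 1),
      (Real.sqrt (2 * π))⁻¹ * Real.exp (-(s + 1) ^ 2 / 2) ≤ gaussianPDFReal 0 1 x := by
    intro x hx
    rw [gaussianPDFReal_01]
    apply mul_le_mul_of_nonneg_left (Real.exp_le_exp.2 (by nlinarith [hx.1, hx.2])) (by positivity)
  have h1 : (Real.sqrt (2 * π))⁻¹ * Real.exp (-(s + 1) ^ 2 / 2)
      ≤ ∫ x in Set.Icc s (s + 1), gaussianPDFReal 0 1 x := by
    have := setIntegral_mono_on (integrableOn_const (by simp [Real.volume_Icc]) enorm_ne_top)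
      hInt measurableSet_Icc hmono
    rwa [setIntegral_const, measureReal_def, Real.volume_Icc, show s + 1 - s = 1 by ring,
      ENNReal.ofReal_one, ENNReal.toReal_one, one_smul] at this
  have h2 : gaussianReal 0 1 (Set.Icc s (s + 1))
      = ENNReal.ofReal (∫ x in Set.Icc s (s + 1), gaussianPDFReal 0 1 x) :=
    gaussianReal_apply_eq_integral 0 one_ne_zero _
  calc (Real.sqrt (2 * π))⁻¹ * Real.exp (-(s + 1) ^ 2 / 2)
      ≤ (gaussianReal 0 1 (Set.Icc s (s + 1))).toReal := by
        rw [h2, ENNReal.toReal_ofReal]; exact h1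
        exact setIntegral_nonneg measurableSet_Icc fun x _ => gaussianPDFReal_nonneg 0 1 x
    _ ≤ stdTail s := by
        apply ENNReal.toReal_mono (measure_ne_top _ _)
        exact measure_mono (fun x hx => hx.1)

lemma stdNormalCDF_tendsto : Tendsto stdNormalCDF atTop (nhds 1) := by
  have h := tendsto_measure_Iic_atTop (μ := gaussianReal 0 1)
  rw [measure_univ] at h
  have := (ENNReal.tendsto_toReal (by norm_num : (1 : ENNReal) ≠ ⊤)).comp h
  exact this

lemma stdTail_tendsto : Tendsto stdTail atTop (nhds 0) := by
  have h : Tendsto (fun s => 1 - stdNormalCDF s) atTop (nhds (1 - 1)) :=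
    tendsto_const_nhds.sub stdNormalCDF_tendsto
  have heq : stdTail = fun s => 1 - stdNormalCDF s := funext stdTail_eq
  rw [heq]
  simpa using h

lemma tendsto_sqrt_atTop : Tendsto Real.sqrt atTop atTop := by
  apply (tendsto_rpow_atTop (by norm_num : (0:ℝ) < 1/2)).congr'
  filter_upwards [eventually_ge_atTop (0:ℝ)] with x hx
  rw [Real.sqrt_eq_rpow]

/-- if `Z_i` are independent `N(θ√(log m), 1)` with
`0 < θ < √(2(1-β))`, and `t_m = G⁻¹(C·m^(β-1))`, then the fraction of indices with
`|Z_i| ≥ t_m` tends to `0` in probability as `m → ∞`. -/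
theorem average_indicator_tendsto_zero
    {Ω : ℕ → Type*} [∀ m, MeasurableSpace (Ω m)]
    (μ : ∀ m, Measure (Ω m)) [∀ m, IsProbabilityMeasure (μ m)]
    (m₁ : ℕ → ℕ) (hm₁ : ∀ m, 1 ≤ m₁ m)
    (θ β C : ℝ) (hβ : β ∈ Set.Ioo (0 : ℝ) 1) (hC : 0 < C)
    (hθpos : 0 < θ) (hθ : θ < Real.sqrt (2 * (1 - β)))
    (t : ℕ → ℝ) (ht0 : ∀ m, 0 ≤ t m)
    (htG : ∀ m : ℕ, 3 ≤ m → Gtail (t m) = C * (m : ℝ) ^ (β - 1))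
    (Z : ∀ m, Fin (m₁ m) → Ω m → ℝ)
    (hmeas : ∀ m i, Measurable (Z m i))
    (hindep : ∀ m, iIndepFun (Z m) (μ m))
    (hlaw : ∀ m (i : Fin (m₁ m)), Measure.map (Z m i) (μ m)
        = gaussianReal (θ * Real.sqrt (Real.log m)) 1) :
    ∀ ε : ℝ, 0 < ε →
      Tendsto (fun m => (μ m {ω |
          ε < (∑ i : Fin (m₁ m),
              if t m ≤ |Z m i ω| then (1:ℝ) else 0) / (m₁ m)
        }).toReal) atTop (nhds 0) := by
  intro ε hε
  obtain ⟨hβ0, hβ1⟩ := hβ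
  set μc : ℕ → ℝ := fun m => θ * Real.sqrt (Real.log m) with hμc
  have hμc0 : ∀ m, 0 ≤ μc m := fun m => mul_nonneg hθpos.le (Real.sqrt_nonneg _)
  set p : ℕ → ℝ := fun m => (gaussianReal (μc m) 1 {x : ℝ | t m ≤ |x|}).toReal with hp
  have hA : ∀ m : ℕ, MeasurableSet {x : ℝ | t m ≤ |x|} := fun m =>
    measurableSet_le measurable_const measurable_abs
  -- Part B: tail bound for p
  have hpbound : ∀ m, p m ≤ 2 * stdTail (t m - μc m) := by
    intro m
    have hset : {x : ℝ | t m ≤ |x|} = Set.Iic (-(t m)) ∪ Set.Ici (t m) := by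
      ext x
      simp only [Set.mem_setOf_eq, Set.mem_union, Set.mem_Iic, Set.mem_Ici, le_abs, le_neg]
      tauto
    have h1 : gaussianReal (μc m) 1 {x : ℝ | t m ≤ |x|}
        ≤ 2 * gaussianReal 0 1 (Set.Ici (t m - μc m)) := by
      rw [hset]
      refine (measure_union_le _ _).trans ?_
      have e1 : gaussianReal (μc m) 1 (Set.Iic (-(t m)))
          = gaussianReal 0 1 (Set.Ici (t m + μc m)) := by
        rw [gaussian_Iic_translate, show -(t m) - μc m = -(t m + μc m) by ring, gaussian_neg_symm]
      have e2 : gaussianReal (μc m) 1 (Set.Ici (t m))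
          = gaussianReal 0 1 (Set.Ici (t m - μc m)) := gaussian_Ici_translate _ _
      rw [e1, e2, two_mul]
      exact add_le_add (measure_mono (Set.Ici_subset_Ici.2 (by linarith [hμc0 m]))) le_rfl
    calc p m ≤ (2 * gaussianReal 0 1 (Set.Ici (t m - μc m))).toReal :=
        ENNReal.toReal_mono (by finiteness) h1
      _ = 2 * stdTail (t m - μc m) := by
        rw [ENNReal.toReal_mul, stdTail]; norm_num
  -- Part C: t m - μc m → ∞
  have hd : 0 < 1 - β - θ^2/2 := by
    have hsq : Real.sqrt (2*(1-β)) ^ 2 = 2*(1-β) :=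
      Real.sq_sqrt (by linarith : (0:ℝ) ≤ 2*(1-β))
    nlinarith [Real.sqrt_nonneg (2*(1-β))]
  have hdiff : Tendsto (fun m => t m - μc m) atTop atTop := by
    rw [tendsto_atTop]
    intro b
    set K := max b 0 with hKdef
    have hK0 : 0 ≤ K := le_max_right _ _
    set d : ℝ := 1 - β - θ^2/2 with hddef
    set b' : ℝ := θ * (K + 1) with hb'def
    set c' : ℝ := Real.log C + (K+1)^2/2 - Real.log (2 * (Real.sqrt (2*Real.pi))⁻¹) with hc'def
    have hL : Tendsto (fun m : ℕ => Real.log m) atTop atTop :=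
      Real.tendsto_log_atTop.comp tendsto_natCast_atTop_atTop
    have hs : Tendsto (fun m : ℕ => Real.sqrt (Real.log m)) atTop atTop :=
      tendsto_sqrt_atTop.comp hL
    have hg : Tendsto (fun m : ℕ => d * Real.log m - b' * Real.sqrt (Real.log m) - c')
        atTop atTop := by
      have hinner : Tendsto (fun m : ℕ => d * Real.sqrt (Real.log m) - b') atTop atTop :=
        tendsto_atTop_add_const_right _ (-b') (hs.const_mul_atTop hd) |>.congr (by
          intro m; ring_nf)
      have hmul : Tendsto
          (fun m : ℕ => Real.sqrt (Real.log m) * (d * Real.sqrt (Real.log m) - b'))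
          atTop atTop := hs.atTop_mul_atTop₀ hinner
      apply (tendsto_atTop_add_const_right _ (-c') hmul).congr'
      filter_upwards [eventually_ge_atTop 1] with m hm
      have hL0 : 0 ≤ Real.log m := Real.log_natCast_nonneg m
      have hss := Real.mul_self_sqrt hL0
      linear_combination d * hss
    filter_upwards [hg.eventually_gt_atTop 0, eventually_ge_atTop 3] with m hgm hm3
    have hm1 : (1:ℝ) ≤ (m:ℝ) := by exact_mod_cast le_trans (by norm_num) hm3
    have hmpos : (0:ℝ) < (m:ℝ) := by linarith
    have hL0 : 0 ≤ Real.log m := Real.log_nonneg hm1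
    have hsqL : Real.sqrt (Real.log m) * Real.sqrt (Real.log m) = Real.log m :=
      Real.mul_self_sqrt hL0
    -- the key strict inequality
    have hlt : C * (m:ℝ)^(β-1) < Gtail (μc m + K) := by
      have hLHS : C * (m:ℝ)^(β-1) = Real.exp (Real.log C + (β-1) * Real.log m) := by
        rw [Real.exp_add, Real.exp_log hC, Real.rpow_def_of_pos hmpos, mul_comm (Real.log m)]
      have h2pi : (0:ℝ) < 2 * (Real.sqrt (2*Real.pi))⁻¹ := by positivity
      have hRHSeq : 2 * ((Real.sqrt (2*Real.pi))⁻¹ * Real.exp (-(μc m + K + 1)^2/2))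
          = Real.exp (Real.log (2 * (Real.sqrt (2*Real.pi))⁻¹) + (-(μc m + K + 1)^2/2)) := by
        rw [Real.exp_add, Real.exp_log h2pi]; ring
      have hRHS : 2 * ((Real.sqrt (2*Real.pi))⁻¹ * Real.exp (-(μc m + K + 1)^2/2))
          ≤ Gtail (μc m + K) := by
        rw [Gtail_eq]
        have := stdTail_lower (s := μc m + K) (by positivity)
        linarith
      refine lt_of_lt_of_le ?_ hRHS
      rw [hLHS, hRHSeq]
      apply Real.exp_lt_exp.2
      have hexpand : (μc m + K + 1)^2
          = θ^2 * Real.log m + 2*θ*(K+1)*Real.sqrt (Real.log m) + (K+1)^2 := by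
        simp only [hμc]
        nlinarith [hsqL]
      rw [hexpand]
      have : 0 < d * Real.log m - b' * Real.sqrt (Real.log m) - c' := hgm
      simp only [hddef, hb'def, hc'def] at this
      linarith
    have hKle : μc m + K ≤ t m := by
      by_contra hcon
      push_neg at hcon
      have := Gtail_anti hcon.le
      rw [htG m hm3] at this
      linarith
    have : b ≤ K := le_max_left _ _
    linarith
  -- p → 0
  have hptend : Tendsto p atTop (nhds 0) := by
    refine squeeze_zero (fun m => ENNReal.toReal_nonneg) hpbound ?_
    have h1 : Tendsto (fun m => stdTail (t m - μc m)) atTop (nhds 0) :=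
      stdTail_tendsto.comp hdiff
    have := h1.const_mul (2:ℝ)
    simpa using this
  -- Part A: Markov
  have hMarkov : ∀ m : ℕ,
      (μ m {ω | ε < (∑ i : Fin (m₁ m),
          if t m ≤ |Z m i ω| then (1:ℝ) else 0) / (m₁ m)}).toReal ≤ p m / ε := by
    intro m
    set f : Ω m → ℝ :=
      fun ω => (∑ i : Fin (m₁ m), if t m ≤ |Z m i ω| then (1:ℝ) else 0) / (m₁ m) with hf
    have hgieq : ∀ i : Fin (m₁ m), (fun ω => if t m ≤ |Z m i ω| then (1:ℝ) else 0)
        = Set.indicator (Z m i ⁻¹' {x | t m ≤ |x|}) (fun _ => (1:ℝ)) := by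
      intro i; funext ω
      simp [Set.indicator_apply, Set.mem_preimage]
    have hgi_int : ∀ i : Fin (m₁ m),
        Integrable (fun ω => if t m ≤ |Z m i ω| then (1:ℝ) else 0) (μ m) := by
      intro i; rw [hgieq i]
      exact (integrable_const 1).indicator ((hmeas m i) (hA m))
    have hgi_val : ∀ i : Fin (m₁ m),
        ∫ ω, (if t m ≤ |Z m i ω| then (1:ℝ) else 0) ∂(μ m) = p m := by
      intro i
      rw [hgieq i, integral_indicator_const _ ((hmeas m i) (hA m)), smul_eq_mul, mul_one, hp]
      congr 1
      rw [measureReal_def, ← Measure.map_apply (hmeas m i) (hA m), hlaw m i]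
    have hf_int : Integrable f (μ m) :=
      (integrable_finset_sum _ (fun i _ => hgi_int i)).div_const _
    have hm₁pos : (0:ℝ) < (m₁ m : ℝ) := by exact_mod_cast hm₁ m
    have hf_avg : ∫ ω, f ω ∂(μ m) = p m := by
      rw [hf]
      simp only
      rw [integral_div, integral_finset_sum _ (fun i _ => hgi_int i)]
      simp only [hgi_val]
      rw [Finset.sum_const, Finset.card_univ, Fintype.card_fin, nsmul_eq_mul]
      field_simp
    have hf_nonneg : 0 ≤ᵐ[μ m] f := ae_of_all _ fun ω => by
      apply div_nonneg (Finset.sum_nonneg fun i _ => by split <;> norm_num) (Nat.cast_nonneg _)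
    have hmk := mul_meas_ge_le_integral_of_nonneg hf_nonneg hf_int ε
    rw [hf_avg, measureReal_def] at hmk
    have hsub : (μ m {ω | ε < f ω}).toReal ≤ (μ m {ω | ε ≤ f ω}).toReal :=
      ENNReal.toReal_mono (measure_ne_top _ _) (measure_mono (Set.setOf_subset_setOf.2 fun ω h => le_of_lt h))
    refine le_trans hsub ?_
    rw [le_div_iff₀ hε]
    linarith
  have hlim : Tendsto (fun m => p m / ε) atTop (nhds 0) := by
    simpa using hptend.div_const ε
  exact squeeze_zero (fun m => ENNReal.toReal_nonneg) hMarkov hlim
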